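/- Let λ < 0 and let G_μ = span{x ∈ H_{1/2} : A₀x = νx, ν ≤ λ²} (a finite-dimensional space since A₀⁻¹ is compact). For every sequence (x_n, y_n) ∈ 𝒟(𝒜) ∩ (G_λ × G_λ)^⊥ with ‖(x_n,y_n)‖ = 1 and (𝒜 − λ)(x_n,y_n) → 0, one has liminf_{n→∞} (⟨A₀x_n, x_n⟩ − λ²⟨x_n, x_n⟩) > 0. -/

import Mathlib

open scoped InnerProductSpace ComplexConjugate
open Filter

/-- Abstract setup for the second order equation `z̈ + A₀ z + D ż = 0`:
`Hhalf` plays the role of `H_{1/2} = 𝒟(A₀^{1/2})` with the norm `‖A₀^{1/2}·‖`, `H` is the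
pivot Hilbert space and `Hm` is the dual `H_{-1/2}`; `ι : H_{1/2} → H` and `j : H → H_{-1/2}`
are the (dense, injective, continuous) inclusions; the uniformly positive self-adjoint
operator `A₀` induces an isometric isomorphism `A₀ : H_{1/2} → H_{-1/2}`; the damping
operator `D : H_{1/2} → H_{-1/2}` is bounded, and `A₀^{-1/2} D A₀^{-1/2}` is self-adjoint
nonnegative, expressed via the duality pairing
`⟨u, z⟩_{H_{-1/2}×H_{1/2}} = ⟪A₀⁻¹ u, z⟫_{H_{1/2}}`. -/
structure BeamSetup (Hhalf H Hm : Type*)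
    [NormedAddCommGroup Hhalf] [InnerProductSpace ℂ Hhalf] [CompleteSpace Hhalf]
    [NormedAddCommGroup H] [InnerProductSpace ℂ H] [CompleteSpace H]
    [NormedAddCommGroup Hm] [InnerProductSpace ℂ Hm] [CompleteSpace Hm] : Type _ where
  ι : Hhalf →L[ℂ] H
  ι_inj : Function.Injective ι
  ι_dense : DenseRange ι
  j : H →L[ℂ] Hm
  j_inj : Function.Injective j
  A₀ : Hhalf ≃ₗᵢ[ℂ] Hm
  compat : ∀ (y : H) (z : Hhalf), ⟪A₀.symm (j y), z⟫_ℂ = ⟪y, ι z⟫_ℂ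
  D : Hhalf →L[ℂ] Hm
  D_symm : ∀ z w : Hhalf, ⟪A₀.symm (D z), w⟫_ℂ = ⟪z, A₀.symm (D w)⟫_ℂ
  D_nonneg : ∀ z : Hhalf, 0 ≤ (⟪A₀.symm (D z), z⟫_ℂ).re

namespace BeamSetup

variable {Hhalf H Hm : Type*}
    [NormedAddCommGroup Hhalf] [InnerProductSpace ℂ Hhalf] [CompleteSpace Hhalf]
    [NormedAddCommGroup H] [InnerProductSpace ℂ H] [CompleteSpace H]
    [NormedAddCommGroup Hm] [InnerProductSpace ℂ Hm] [CompleteSpace Hm]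
    (S : BeamSetup Hhalf H Hm)

/-- `A₀⁻¹ : H_{-1/2} → H_{1/2}` as a continuous linear map. -/
noncomputable def Ai : Hm →L[ℂ] Hhalf :=
  (S.A₀.symm.toContinuousLinearEquiv : Hm ≃L[ℂ] Hhalf)

/-- `A₀⁻¹ D` as a bounded operator on `H_{1/2}`. -/
noncomputable def T : Hhalf →L[ℂ] Hhalf := S.Ai.comp S.D

/-- `A₀⁻¹ : H → H_{1/2}`. -/
noncomputable def Ainv : H →L[ℂ] Hhalf := S.Ai.comp S.j

/-- `A₀⁻¹` considered as a bounded operator on `H_{1/2}`. -/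
noncomputable def AinvR : Hhalf →L[ℂ] Hhalf := S.Ainv.comp S.ι

/-- `A₀⁻¹` considered as a bounded operator on `H`. -/
noncomputable def AinvH : H →L[ℂ] H := S.ι.comp S.Ainv

/-- `λ` is an eigenvalue of the operator matrix `𝒜 = [[0, I], [-A₀, -D]]` with domain
`𝒟(𝒜) = {(z,w) ∈ H_{1/2} × H_{1/2} : A₀ z + D w ∈ H}`: there is a nonzero
`(z, ι w) ∈ 𝒟(𝒜)` (the domain condition being `j y = A₀ z + D w`, so that
`𝒜 (z, ι w) = (w, -y)`) with `𝒜 (z, ι w) = λ • (z, ι w)`. -/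
def IsEigenvalue (lam : ℂ) : Prop :=
  ∃ (z w : Hhalf) (y : H), S.j y = S.A₀ z + S.D w ∧
    ((z, S.ι w) : Hhalf × H) ≠ 0 ∧ w = lam • z ∧ -y = lam • S.ι w

/-- `λ` belongs to the resolvent set of `𝒜`: there is a bounded operator `R` on
`H_{1/2} × H` mapping onto `𝒟(𝒜)` which inverts `𝒜 - λ` from both sides. -/
def InResolvent (lam : ℂ) : Prop :=
  ∃ R : (Hhalf × H) →L[ℂ] (Hhalf × H),
    (∀ q : Hhalf × H, ∃ (z w : Hhalf) (y : H),
        R q = (z, S.ι w) ∧ S.j y = S.A₀ z + S.D w ∧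
        ((w, -y) : Hhalf × H) - lam • ((z, S.ι w) : Hhalf × H) = q) ∧
    (∀ (z w : Hhalf) (y : H), S.j y = S.A₀ z + S.D w →
        R (((w, -y) : Hhalf × H) - lam • ((z, S.ι w) : Hhalf × H)) = (z, S.ι w))


end BeamSetup

open BeamSetup

/-- The essential spectrum of a bounded operator: the set of `λ` for which `T - λ` is not
Fredholm (finite-dimensional kernel and finite-codimensional range). -/
def essSpectrum {X : Type*} [NormedAddCommGroup X] [NormedSpace ℂ X] (T : X →L[ℂ] X) :
    Set ℂ :=
  {lam | ¬ (FiniteDimensional ℂ (LinearMap.ker ((T - lam • (1 : X →L[ℂ] X) : X →L[ℂ] X) : X →ₗ[ℂ] X)) ∧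
            FiniteDimensional ℂ (X ⧸ LinearMap.range ((T - lam • (1 : X →L[ℂ] X) : X →L[ℂ] X) : X →ₗ[ℂ] X)))}

section Aux

variable {Hhalf H Hm : Type*}
    [NormedAddCommGroup Hhalf] [InnerProductSpace ℂ Hhalf] [CompleteSpace Hhalf]
    [NormedAddCommGroup H] [InnerProductSpace ℂ H] [CompleteSpace H]
    [NormedAddCommGroup Hm] [InnerProductSpace ℂ Hm] [CompleteSpace Hm]
    (S : BeamSetup Hhalf H Hm)

lemma aux_ainvR_apply (x : Hhalf) : S.AinvR x = S.A₀.symm (S.j (S.ι x)) := rfl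

lemma aux_inner_ainvR (x y : Hhalf) : ⟪S.AinvR x, y⟫_ℂ = ⟪S.ι x, S.ι y⟫_ℂ := by
  rw [aux_ainvR_apply]; exact S.compat (S.ι x) y

lemma aux_ainvR_selfadj (x y : Hhalf) : ⟪S.AinvR x, y⟫_ℂ = ⟪x, S.AinvR y⟫_ℂ := by
  calc ⟪S.AinvR x, y⟫_ℂ = ⟪S.ι x, S.ι y⟫_ℂ := aux_inner_ainvR S x y
    _ = (starRingEnd ℂ) ⟪S.ι y, S.ι x⟫_ℂ := (inner_conj_symm _ _).symm
    _ = (starRingEnd ℂ) ⟪S.AinvR y, x⟫_ℂ := by rw [aux_inner_ainvR]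
    _ = ⟪x, S.AinvR y⟫_ℂ := inner_conj_symm _ _

lemma aux_sq_compact (hcpt : IsCompactOperator ⇑S.AinvH) :
    IsCompactOperator ⇑(S.AinvR.comp S.AinvR) := by
  have h1 : IsCompactOperator (⇑S.Ainv ∘ ⇑S.AinvH) :=
    hcpt.continuous_comp S.Ainv.continuous
  have h2 : IsCompactOperator ((⇑S.Ainv ∘ ⇑S.AinvH) ∘ ⇑S.ι) := h1.comp_clm S.ι
  exact h2

/-- The key spectral estimate: on `Gᗮ` one has `‖ι x‖² ≤ μ ‖x‖²` for some `μ` with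
`μ λ² < 1`. -/
lemma aux_key (hcpt : IsCompactOperator ⇑S.AinvH) (lam : ℝ) (hlam : lam < 0)
    (G : Submodule ℂ Hhalf)
    (hG : G = Submodule.span ℂ
      {g : Hhalf | ∃ ν : ℝ, ν ≤ lam ^ 2 ∧ S.A₀ g = (ν : ℂ) • S.j (S.ι g)}) :
    ∃ μ : ℝ, 0 ≤ μ ∧ μ * lam ^ 2 < 1 ∧ ∀ x ∈ Gᗮ, ‖S.ι x‖ ^ 2 ≤ μ * ‖x‖ ^ 2 := by
  classical
  -- `K := A₀⁻¹` as operator on `H_{1/2}` maps `G` to `G`.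
  have hKG : ∀ g ∈ G, S.AinvR g ∈ G := by
    intro g hg
    rw [hG] at hg ⊢
    induction hg using Submodule.span_induction with
    | mem g hg =>
        obtain ⟨ν, hν, hA⟩ := hg
        have hg2 : g = (ν : ℂ) • S.AinvR g := by
          have := congrArg S.A₀.symm hA
          rw [LinearIsometryEquiv.symm_apply_apply, map_smul] at this
          rw [aux_ainvR_apply]; exact this
        rcases eq_or_ne (ν : ℂ) 0 with h0 | h0
        · have : g = 0 := by rw [hg2, h0, zero_smul]
          rw [this, map_zero]; exact Submodule.zero_mem _
        · have : S.AinvR g = ((ν : ℂ))⁻¹ • g := by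
            conv_rhs => rw [hg2]
            rw [smul_smul, inv_mul_cancel₀ h0, one_smul]
          rw [this]
          exact Submodule.smul_mem _ _ (Submodule.subset_span ⟨ν, hν, hA⟩)
    | zero => rw [map_zero]; exact Submodule.zero_mem _
    | add a b _ _ ha hb => rw [map_add]; exact Submodule.add_mem _ ha hb
    | smul c a _ ha => rw [map_smul]; exact Submodule.smul_mem _ _ ha
  -- Hence `K` maps `Gᗮ` to `Gᗮ`.
  have hKperp : ∀ x ∈ Gᗮ, S.AinvR x ∈ Gᗮ := by
    intro x hx
    rw [Submodule.mem_orthogonal]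
    intro g hgG
    have h1 : ⟪S.AinvR g, x⟫_ℂ = ⟪g, S.AinvR x⟫_ℂ := aux_ainvR_selfadj S g x
    rw [← h1]
    exact (Submodule.mem_orthogonal _ _).mp hx _ (hKG g hgG)
  -- Define `μ` as the sup of the Rayleigh quotient of `ι` on `Gᗮ`.
  set s : Set ℝ :=
    insert 0 ((fun z : Hhalf => ‖S.ι z‖ ^ 2) '' {z | z ∈ Gᗮ ∧ ‖z‖ = 1}) with hs
  have hsne : s.Nonempty := ⟨0, Set.mem_insert _ _⟩
  have hsbdd : BddAbove s := by
    refine ⟨max 0 (‖S.ι‖ ^ 2), ?_⟩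
    rintro r (rfl | ⟨z, ⟨hz, hz1⟩, rfl⟩)
    · exact le_max_left _ _
    · refine le_max_of_le_right ?_
      have h := S.ι.le_opNorm z
      rw [hz1, mul_one] at h
      exact pow_le_pow_left₀ (norm_nonneg _) h 2
  set μ := sSup s with hμdef
  have hμ0 : 0 ≤ μ := le_csSup hsbdd (Set.mem_insert _ _)
  have hunit : ∀ z ∈ Gᗮ, ‖z‖ = 1 → ‖S.ι z‖ ^ 2 ≤ μ := fun z hz h1 =>
    le_csSup hsbdd (Set.mem_insert_iff.mpr (Or.inr ⟨z, ⟨hz, h1⟩, rfl⟩))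
  have hbound : ∀ x ∈ Gᗮ, ‖S.ι x‖ ^ 2 ≤ μ * ‖x‖ ^ 2 := by
    intro x hx
    rcases eq_or_ne x 0 with rfl | hx0
    · simp
    · have hn : (0 : ℝ) < ‖x‖ := norm_pos_iff.mpr hx0
      set z : Hhalf := ((‖x‖ : ℂ))⁻¹ • x with hzdef
      have hz1 : ‖z‖ = 1 := by
        rw [hzdef, norm_smul, norm_inv, Complex.norm_real, Real.norm_eq_abs,
          abs_of_pos hn, inv_mul_cancel₀ hn.ne']
      have hzperp : z ∈ Gᗮ := Submodule.smul_mem _ _ hx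
      have h := hunit z hzperp hz1
      have hz2 : ‖S.ι z‖ = ‖x‖⁻¹ * ‖S.ι x‖ := by
        rw [hzdef, map_smul, norm_smul, norm_inv, Complex.norm_real, Real.norm_eq_abs,
          abs_of_pos hn]
      rw [hz2, mul_pow] at h
      have h2 : ‖S.ι x‖ ^ 2 ≤ μ * ‖x‖ ^ 2 := by
        have hx2 : (0 : ℝ) < ‖x‖ ^ 2 := by positivity
        calc ‖S.ι x‖ ^ 2 = (‖x‖⁻¹ ^ 2 * ‖S.ι x‖ ^ 2) * ‖x‖ ^ 2 := by
              field_simp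
          _ ≤ μ * ‖x‖ ^ 2 := by
              exact mul_le_mul_of_nonneg_right h hx2.le
      exact h2
  refine ⟨μ, hμ0, ?_, hbound⟩
  -- It remains to show `μ λ² < 1`. Suppose not.
  by_contra hcon
  push_neg at hcon
  have hlamne : lam ≠ 0 := ne_of_lt hlam
  have hl2 : 0 < lam ^ 2 := by positivity
  have hμpos : 0 < μ := by nlinarith
  -- Approximating sequence for the sup.
  have hseq : ∀ k : ℕ, ∃ z : Hhalf, z ∈ Gᗮ ∧ ‖z‖ = 1 ∧
      μ - 1 / (k + 1) < ‖S.ι z‖ ^ 2 := by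
    intro k
    have hεpos : 0 < min (1 / ((k : ℝ) + 1)) (μ / 2) :=
      lt_min (by positivity) (by linarith)
    have hlt : μ - min (1 / ((k : ℝ) + 1)) (μ / 2) < sSup s := by
      rw [← hμdef]; linarith
    obtain ⟨r, hr, hr2⟩ := exists_lt_of_lt_csSup hsne hlt
    have hminr := min_le_right (1 / ((k : ℝ) + 1)) (μ / 2)
    have hminl := min_le_left (1 / ((k : ℝ) + 1)) (μ / 2)
    rcases hr with rfl | ⟨z, ⟨hz, h1⟩, rfl⟩
    · exfalso; linarith
    · exact ⟨z, hz, h1, by linarith⟩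
  choose z hzperp hznorm hzlb using hseq
  have hub : ∀ k, ‖S.ι (z k)‖ ^ 2 ≤ μ := fun k => hunit _ (hzperp k) (hznorm k)
  -- `‖K x‖ ≤ μ ‖x‖` on `Gᗮ`.
  have hKle : ∀ x ∈ Gᗮ, ‖S.AinvR x‖ ≤ μ * ‖x‖ := by
    intro x hx
    have h3 : ‖S.AinvR x‖ ^ 2 ≤ ‖S.ι x‖ * ‖S.ι (S.AinvR x)‖ := by
      calc ‖S.AinvR x‖ ^ 2 = RCLike.re ⟪S.AinvR x, S.AinvR x⟫_ℂ :=
            (inner_self_eq_norm_sq _).symm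
        _ = RCLike.re ⟪S.ι x, S.ι (S.AinvR x)⟫_ℂ := by rw [aux_inner_ainvR]
        _ ≤ ‖⟪S.ι x, S.ι (S.AinvR x)⟫_ℂ‖ := RCLike.re_le_norm _
        _ ≤ ‖S.ι x‖ * ‖S.ι (S.AinvR x)‖ := norm_inner_le_norm _ _
    have h4 : ‖S.ι x‖ ≤ Real.sqrt μ * ‖x‖ := by
      have := hbound x hx
      have h5 : ‖S.ι x‖ = Real.sqrt (‖S.ι x‖ ^ 2) := (Real.sqrt_sq (norm_nonneg _)).symm
      rw [h5]
      calc Real.sqrt (‖S.ι x‖ ^ 2) ≤ Real.sqrt (μ * ‖x‖ ^ 2) := Real.sqrt_le_sqrt this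
        _ = Real.sqrt μ * ‖x‖ := by
            rw [Real.sqrt_mul hμ0, Real.sqrt_sq (norm_nonneg _)]
    have h6 : ‖S.ι (S.AinvR x)‖ ≤ Real.sqrt μ * ‖S.AinvR x‖ := by
      have := hbound _ (hKperp x hx)
      have h5 : ‖S.ι (S.AinvR x)‖ = Real.sqrt (‖S.ι (S.AinvR x)‖ ^ 2) :=
        (Real.sqrt_sq (norm_nonneg _)).symm
      rw [h5]
      calc Real.sqrt (‖S.ι (S.AinvR x)‖ ^ 2) ≤ Real.sqrt (μ * ‖S.AinvR x‖ ^ 2) :=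
            Real.sqrt_le_sqrt this
        _ = Real.sqrt μ * ‖S.AinvR x‖ := by
            rw [Real.sqrt_mul hμ0, Real.sqrt_sq (norm_nonneg _)]
    have hsq : Real.sqrt μ * Real.sqrt μ = μ := Real.mul_self_sqrt hμ0
    have h7 : ‖S.AinvR x‖ ^ 2 ≤ μ * ‖x‖ * ‖S.AinvR x‖ := by
      calc ‖S.AinvR x‖ ^ 2 ≤ ‖S.ι x‖ * ‖S.ι (S.AinvR x)‖ := h3
        _ ≤ (Real.sqrt μ * ‖x‖) * (Real.sqrt μ * ‖S.AinvR x‖) := by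
            exact mul_le_mul h4 h6 (norm_nonneg _) (by positivity)
        _ = (Real.sqrt μ * Real.sqrt μ) * (‖x‖ * ‖S.AinvR x‖) := by ring
        _ = μ * ‖x‖ * ‖S.AinvR x‖ := by rw [hsq]; ring
    rcases eq_or_lt_of_le (norm_nonneg (S.AinvR x)) with h8 | h8
    · rw [← h8]; positivity
    · nlinarith
  -- The approximate eigenvector estimate.
  set d : ℕ → Hhalf := fun k => S.AinvR (z k) - (μ : ℂ) • z k with hddef
  have hd : ∀ k, ‖d k‖ ^ 2 ≤ 2 * μ * (1 / (k + 1)) := by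
    intro k
    have hexp : ‖d k‖ ^ 2 = ‖S.AinvR (z k)‖ ^ 2
        - 2 * RCLike.re ⟪S.AinvR (z k), (μ : ℂ) • z k⟫_ℂ + ‖(μ : ℂ) • z k‖ ^ 2 :=
      norm_sub_sq _ _
    have hre : RCLike.re ⟪S.AinvR (z k), (μ : ℂ) • z k⟫_ℂ = μ * ‖S.ι (z k)‖ ^ 2 := by
      have hinner : ⟪S.ι (z k), S.ι (z k)⟫_ℂ = ((‖S.ι (z k)‖ ^ 2 : ℝ) : ℂ) := by
        rw [inner_self_eq_norm_sq_to_K]; norm_cast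
      rw [inner_smul_right, aux_inner_ainvR, hinner]
      simp [RCLike.re_to_complex, Complex.mul_re, ← Complex.ofReal_pow]
    have hKz : ‖S.AinvR (z k)‖ ≤ μ := by
      have := hKle (z k) (hzperp k); rwa [hznorm k, mul_one] at this
    have hKz2 : ‖S.AinvR (z k)‖ ^ 2 ≤ μ ^ 2 :=
      pow_le_pow_left₀ (norm_nonneg _) hKz 2
    have hμz : ‖(μ : ℂ) • z k‖ ^ 2 = μ ^ 2 := by
      rw [norm_smul, Complex.norm_real, Real.norm_eq_abs, abs_of_nonneg hμ0,
        hznorm k, mul_one]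
    have hlb := hzlb k
    have hub2 := hub k
    rw [hexp, hre, hμz]
    nlinarith
  have hd0 : Filter.Tendsto d atTop (nhds 0) := by
    rw [tendsto_zero_iff_norm_tendsto_zero]
    have hbdd : ∀ k : ℕ, ‖d k‖ ≤ Real.sqrt (2 * μ * (1 / (k + 1))) := by
      intro k
      rw [Real.le_sqrt (norm_nonneg _) (by positivity)]
      exact hd k
    have htend : Filter.Tendsto (fun k : ℕ => Real.sqrt (2 * μ * (1 / (k + 1))))
        atTop (nhds 0) := by
      have h1 : Filter.Tendsto (fun k : ℕ => 2 * μ * (1 / ((k : ℝ) + 1)))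
          atTop (nhds 0) := by
        have := tendsto_one_div_add_atTop_nhds_zero_nat.const_mul (2 * μ)
        simpa using this
      have h2 := (Real.continuous_sqrt.tendsto 0).comp h1
      simpa [Function.comp_def] using h2
    exact squeeze_zero (fun k => norm_nonneg _) hbdd htend
  -- Extract a convergent subsequence using compactness of `K²`.
  have hQ : IsCompact (closure
      ((S.AinvR.comp S.AinvR : Hhalf →ₗ[ℂ] Hhalf) '' Metric.closedBall 0 1)) :=
    (aux_sq_compact S hcpt).isCompact_closure_image_closedBall
      (f := (S.AinvR.comp S.AinvR : Hhalf →ₗ[ℂ] Hhalf)) 1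
  have hmem : ∀ k, S.AinvR (S.AinvR (z k)) ∈ closure
      ((S.AinvR.comp S.AinvR : Hhalf →ₗ[ℂ] Hhalf) '' Metric.closedBall 0 1) := by
    intro k
    apply subset_closure
    exact ⟨z k, by simp [Metric.mem_closedBall, hznorm k, dist_zero_right], rfl⟩
  obtain ⟨v, hv, φ, hφ, hvtend⟩ := hQ.tendsto_subseq hmem
  -- `K² z - μ² z → 0`.
  have hKKd : Filter.Tendsto
      (fun k => S.AinvR (S.AinvR (z k)) - ((μ : ℂ) ^ 2) • z k) atTop (nhds 0) := by
    have heq : ∀ k, S.AinvR (S.AinvR (z k)) - ((μ : ℂ) ^ 2) • z k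
        = S.AinvR (d k) + (μ : ℂ) • d k := by
      intro k
      rw [hddef]
      simp only [map_sub, map_smul, smul_sub, smul_smul, pow_two]
      exact (sub_add_sub_cancel _ _ _).symm
    have h1 : Filter.Tendsto (fun k => S.AinvR (d k) + (μ : ℂ) • d k)
        atTop (nhds 0) := by
      have h2 := (S.AinvR.continuous.tendsto 0).comp hd0
      have h3 : Filter.Tendsto (fun k => (μ : ℂ) • d k) atTop (nhds 0) := by
        have := hd0.const_smul ((μ : ℂ))
        simpa using this
      have h4 := Filter.Tendsto.add (by simpa using h2) h3
      simpa using h4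
    exact h1.congr fun k => (heq k).symm
  -- The subsequence of `z` converges.
  have hμ2ne : ((μ : ℂ) ^ 2) ≠ 0 := by
    simp [pow_ne_zero, Complex.ofReal_ne_zero, hμpos.ne']
  obtain ⟨g, hgdef⟩ : ∃ g : Hhalf, g = (((μ : ℂ) ^ 2))⁻¹ • v := ⟨_, rfl⟩
  have hztend : Filter.Tendsto (fun k => z (φ k)) atTop (nhds g) := by
    have h1 : Filter.Tendsto (fun k => S.AinvR (S.AinvR (z (φ k)))
        - ((μ : ℂ) ^ 2) • z (φ k)) atTop (nhds 0) := hKKd.comp hφ.tendsto_atTop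
    have h2 : Filter.Tendsto (fun k => ((μ : ℂ) ^ 2) • z (φ k)) atTop (nhds v) := by
      have h3 := Filter.Tendsto.sub hvtend h1
      simp only [sub_zero] at h3
      exact h3.congr fun k => sub_sub_cancel _ _
    have h4 := h2.const_smul ((((μ : ℂ) ^ 2))⁻¹)
    simp only [smul_smul, inv_mul_cancel₀ hμ2ne, one_smul] at h4
    rw [hgdef]
    exact h4
  have hg1 : ‖g‖ = 1 := by
    have h1 : Filter.Tendsto (fun k => ‖z (φ k)‖) atTop (nhds ‖g‖) :=
      hztend.norm
    have h2 : Filter.Tendsto (fun k => ‖z (φ k)‖) atTop (nhds 1) := by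
      simp only [hznorm]; exact tendsto_const_nhds
    exact tendsto_nhds_unique h1 h2
  have hgperp : g ∈ Gᗮ := by
    have hcl : IsClosed (Gᗮ : Set Hhalf) := Submodule.isClosed_orthogonal G
    exact hcl.mem_of_tendsto hztend
      (Filter.Eventually.of_forall fun k => hzperp (φ k))
  have hKg : S.AinvR g = (μ : ℂ) • g := by
    have h1 : Filter.Tendsto (fun k => d (φ k)) atTop
        (nhds (S.AinvR g - (μ : ℂ) • g)) := by
      have h2 := (S.AinvR.continuous.tendsto g).comp hztend
      have h3 := hztend.const_smul ((μ : ℂ))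
      exact Filter.Tendsto.sub (by simpa [Function.comp_def] using h2) h3
    have h2 : Filter.Tendsto (fun k => d (φ k)) atTop (nhds 0) :=
      hd0.comp hφ.tendsto_atTop
    have := tendsto_nhds_unique h1 h2
    rwa [sub_eq_zero] at this
  -- So `g` is an eigenvector of `A₀` with eigenvalue `μ⁻¹ ≤ λ²`, hence `g ∈ G`.
  have hAg : S.A₀ g = ((μ⁻¹ : ℝ) : ℂ) • S.j (S.ι g) := by
    have h1 : S.A₀.symm (S.j (S.ι g)) = (μ : ℂ) • g := by
      rw [← aux_ainvR_apply]; exact hKg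
    have h2 := congrArg S.A₀ h1
    rw [LinearIsometryEquiv.apply_symm_apply, map_smul] at h2
    rw [Complex.ofReal_inv]
    rw [h2, smul_smul, inv_mul_cancel₀ (by simpa using hμpos.ne' : (μ : ℂ) ≠ 0),
      one_smul]
  have hνle : μ⁻¹ ≤ lam ^ 2 := by
    rw [inv_le_iff_one_le_mul₀ hμpos]
    linarith [hcon]
  have hgG : g ∈ G := by
    rw [hG]
    exact Submodule.subset_span ⟨μ⁻¹, hνle, hAg⟩
  have hg0 : g = 0 := by
    have := (Submodule.mem_orthogonal _ _).mp hgperp g hgG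
    exact inner_self_eq_zero.mp this
  rw [hg0, norm_zero] at hg1
  norm_num at hg1

end Aux

open Filter in
/-- Let `λ < 0` and let `G` be the span of the eigenvectors of `A₀` for
eigenvalues `ν ≤ λ²` (a finite-dimensional space since `A₀⁻¹` is compact). For every
sequence `(xₙ, ι wₙ) ∈ 𝒟(𝒜) ∩ (G × G)^⊥` with `‖(xₙ, ι wₙ)‖² = 1` and
`(𝒜 − λ)(xₙ, ι wₙ) → 0`, one has
`liminf (⟨A₀ xₙ, xₙ⟩ − λ² ⟨xₙ, xₙ⟩) = liminf (‖xₙ‖²_{H_{1/2}} − λ² ‖xₙ‖²_H) > 0`. -/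
theorem statement19 {Hhalf H Hm : Type*}
    [NormedAddCommGroup Hhalf] [InnerProductSpace ℂ Hhalf] [CompleteSpace Hhalf]
    [NormedAddCommGroup H] [InnerProductSpace ℂ H] [CompleteSpace H]
    [NormedAddCommGroup Hm] [InnerProductSpace ℂ Hm] [CompleteSpace Hm]
    (S : BeamSetup Hhalf H Hm)
    (hcpt : IsCompactOperator ⇑S.AinvH)
    (h0 : (0 : ℂ) ∉ essSpectrum S.T)
    (lam : ℝ) (hlam : lam < 0)
    (G : Submodule ℂ Hhalf)
    (hG : G = Submodule.span ℂ
      {g : Hhalf | ∃ ν : ℝ, ν ≤ lam ^ 2 ∧ S.A₀ g = (ν : ℂ) • S.j (S.ι g)})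
    (x w : ℕ → Hhalf) (u : ℕ → H)
    (hdom : ∀ n, S.j (u n) = S.A₀ (x n) + S.D (w n))
    (hperp1 : ∀ n, ∀ g ∈ G, ⟪g, x n⟫_ℂ = 0)
    (hperp2 : ∀ n, ∀ g ∈ G, ⟪S.ι g, S.ι (w n)⟫_ℂ = 0)
    (hnorm : ∀ n, ‖x n‖ ^ 2 + ‖S.ι (w n)‖ ^ 2 = 1)
    (hconv : Tendsto
      (fun n => ((w n - (lam : ℂ) • x n, -(u n) - (lam : ℂ) • S.ι (w n)) : Hhalf × H))
      atTop (nhds 0)) :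
    0 < Filter.liminf (fun n => ‖x n‖ ^ 2 - lam ^ 2 * ‖S.ι (x n)‖ ^ 2) atTop := by
  obtain ⟨μ, hμ0, hμlt, hbound⟩ := aux_key S hcpt lam hlam G hG
  have hxperp : ∀ n, x n ∈ Gᗮ := fun n =>
    (Submodule.mem_orthogonal _ _).mpr (hperp1 n)
  set ε : ℝ := 1 - μ * lam ^ 2 with hεdef
  have hεpos : 0 < ε := by rw [hεdef]; linarith
  have hl2 : 0 ≤ lam ^ 2 := sq_nonneg lam
  -- pointwise lower bound in terms of `‖x n‖²`
  have hptwise : ∀ n, ε * ‖x n‖ ^ 2 ≤ ‖x n‖ ^ 2 - lam ^ 2 * ‖S.ι (x n)‖ ^ 2 := by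
    intro n
    have h1 := hbound (x n) (hxperp n)
    have h2 : lam ^ 2 * ‖S.ι (x n)‖ ^ 2 ≤ lam ^ 2 * (μ * ‖x n‖ ^ 2) :=
      mul_le_mul_of_nonneg_left h1 hl2
    rw [hεdef]; nlinarith
  -- first component of the convergence hypothesis
  have h1 : Tendsto (fun n => w n - (lam : ℂ) • x n) atTop (nhds 0) := by
    have := (continuous_fst.tendsto (0 : Hhalf × H)).comp hconv
    simpa [Function.comp_def] using this
  have h2 : Tendsto (fun n => S.ι (w n) - (lam : ℂ) • S.ι (x n)) atTop (nhds 0) := by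
    have h3 := (S.ι.continuous.tendsto 0).comp h1
    simp only [Function.comp_def, map_zero] at h3
    exact h3.congr fun n => by rw [map_sub, map_smul]
  -- eventually `‖x n‖²` is bounded below
  set c : ℝ := |lam| * ‖S.ι‖ with hcdef
  have hc0 : 0 ≤ c := by positivity
  set δ : ℝ := 1 / (2 * (1 + 2 * c ^ 2)) with hδdef
  have hδpos : 0 < δ := by rw [hδdef]; positivity
  have hev : ∀ᶠ n in atTop, δ ≤ ‖x n‖ ^ 2 := by
    have h4 := (NormedAddCommGroup.tendsto_nhds_zero.mp h2) (1 / 2) (by norm_num)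
    filter_upwards [h4] with n hn
    set a : ℝ := ‖S.ι (w n) - (lam : ℂ) • S.ι (x n)‖ with hadef
    set t : ℝ := ‖x n‖ with htdef
    set W : ℝ := ‖S.ι (w n)‖ with hWdef
    have ha0 : 0 ≤ a := norm_nonneg _
    have ht0 : 0 ≤ t := norm_nonneg _
    have hW0 : 0 ≤ W := norm_nonneg _
    have hWle : W ≤ a + c * t := by
      have h5 : W = ‖(S.ι (w n) - (lam : ℂ) • S.ι (x n)) + (lam : ℂ) • S.ι (x n)‖ := by
        rw [hWdef]; congr 1; abel
      have h6 : ‖(lam : ℂ) • S.ι (x n)‖ ≤ c * t := by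
        rw [norm_smul, Complex.norm_real, Real.norm_eq_abs, hcdef, htdef]
        have := S.ι.le_opNorm (x n)
        calc |lam| * ‖S.ι (x n)‖ ≤ |lam| * (‖S.ι‖ * ‖x n‖) :=
              mul_le_mul_of_nonneg_left this (abs_nonneg _)
          _ = |lam| * ‖S.ι‖ * ‖x n‖ := by ring
      calc W ≤ ‖S.ι (w n) - (lam : ℂ) • S.ι (x n)‖ + ‖(lam : ℂ) • S.ι (x n)‖ := by
            rw [h5]; exact norm_add_le _ _
        _ ≤ a + c * t := by rw [← hadef]; linarith
    have hn' : a ≤ 1 / 2 := le_of_lt hn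
    have hns : t ^ 2 + W ^ 2 = 1 := hnorm n
    have hW2 : W ^ 2 ≤ (a + c * t) ^ 2 := by nlinarith
    have hkey : 1 ≤ (2 * (1 + 2 * c ^ 2)) * t ^ 2 := by nlinarith [sq_nonneg (a - c * t)]
    rw [hδdef, div_le_iff₀ (by positivity)]
    linarith [hkey, mul_comm (t ^ 2) (2 * (1 + 2 * c ^ 2))]
  -- conclude via the liminf
  have hevf : ∀ᶠ n in atTop, ε * δ ≤ ‖x n‖ ^ 2 - lam ^ 2 * ‖S.ι (x n)‖ ^ 2 := by
    filter_upwards [hev] with n hn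
    calc ε * δ ≤ ε * ‖x n‖ ^ 2 := mul_le_mul_of_nonneg_left hn hεpos.le
      _ ≤ _ := hptwise n
  have hbddabove : IsBoundedUnder (· ≤ ·) atTop
      (fun n => ‖x n‖ ^ 2 - lam ^ 2 * ‖S.ι (x n)‖ ^ 2) := by
    refine isBoundedUnder_of ⟨1, fun n => ?_⟩
    have := hnorm n
    nlinarith [sq_nonneg ‖S.ι (w n)‖, sq_nonneg ‖S.ι (x n)‖]
  have hcobdd : IsCoboundedUnder (· ≥ ·) atTop
      (fun n => ‖x n‖ ^ 2 - lam ^ 2 * ‖S.ι (x n)‖ ^ 2) :=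
    hbddabove.isCoboundedUnder_ge
  have hle := le_liminf_of_le hcobdd hevf
  calc (0 : ℝ) < ε * δ := by positivity
    _ ≤ _ := hle
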